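/- Let N ≥ 1, let p_1,…,p_N ∈ (0,1), and set c_i = min{p_i, 1 − p_i}. Fix λ ≥ 0 and define D̃*_i = min{λ, c_i}. Then for every tuple (D̃_1,…,D̃_N) with 0 ≤ D̃_i ≤ c_i for all i and Σ_{i=1}^N D̃_i = Σ_{i=1}^N D̃*_i, one has Σ_{i=1}^N (H(p_i) − H(D̃*_i)) ≤ Σ_{i=1}^N (H(p_i) − H(D̃_i)); that is, the reverse water-filling allocation D̃*_i = min{λ, p_i, 1−p_i} minimizes the total rate Σ_i (H(p_i) − H(D̃_i)) subject to the total-distortion constraint. -/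

import Mathlib

/-- The binary entropy function (base 2), with `H 0 = H 1 = 0`. -/
noncomputable def H2 (u : ℝ) : ℝ := -u * Real.logb 2 u - (1 - u) * Real.logb 2 (1 - u)

lemma gibbs (x a : ℝ) (hx0 : 0 ≤ x) (hx1 : x ≤ 1) (ha0 : 0 < a) (ha1 : a < 1) :
    -(x * Real.log x) - (1 - x) * Real.log (1 - x)
      ≤ -(x * Real.log a) - (1 - x) * Real.log (1 - a) := by
  rcases eq_or_lt_of_le hx0 with h0 | h0
  · have : Real.log (1 - a) ≤ 0 := Real.log_nonpos (by linarith) (by linarith)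
    simp [← h0]
    linarith
  rcases eq_or_lt_of_le hx1 with h1 | h1
  · have : Real.log a ≤ 0 := Real.log_nonpos (by linarith) (by linarith)
    simp [h1]
    linarith
  · have hx1' : 0 < 1 - x := by linarith
    have l1 : Real.log a - Real.log x ≤ a / x - 1 := by
      have := Real.log_le_sub_one_of_pos (show 0 < a / x by positivity)
      rwa [Real.log_div ha0.ne' h0.ne'] at this
    have l2 : Real.log (1 - a) - Real.log (1 - x) ≤ (1 - a) / (1 - x) - 1 := by
      have := Real.log_le_sub_one_of_pos (div_pos (show (0:ℝ) < 1 - a by linarith) hx1')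
      rwa [Real.log_div (by linarith) hx1'.ne'] at this
    have m1 : x * (Real.log a - Real.log x) ≤ a - x := by
      have h := mul_le_mul_of_nonneg_left l1 h0.le
      have e : x * (a / x - 1) = a - x := by field_simp
      linarith
    have m2 : (1 - x) * (Real.log (1 - a) - Real.log (1 - x)) ≤ x - a := by
      have h := mul_le_mul_of_nonneg_left l2 hx1'.le
      have e : (1 - x) * ((1 - a) / (1 - x) - 1) = x - a := by field_simp; ring
      linarith
    nlinarith [m1, m2]

lemma tangent (x a : ℝ) (hx0 : 0 ≤ x) (hx1 : x ≤ 1) (ha0 : 0 < a) (ha1 : a < 1) :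
    H2 x ≤ H2 a + Real.logb 2 ((1 - a) / a) * (x - a) := by
  have hl2 : (0 : ℝ) < Real.log 2 := Real.log_pos one_lt_two
  have key := gibbs x a hx0 hx1 ha0 ha1
  have e1 : H2 x * Real.log 2 = -(x * Real.log x) - (1 - x) * Real.log (1 - x) := by
    simp only [H2, Real.logb]
    field_simp
  have e2 : (H2 a + Real.logb 2 ((1 - a) / a) * (x - a)) * Real.log 2
      = -(x * Real.log a) - (1 - x) * Real.log (1 - a) := by
    simp only [H2, Real.logb, Real.log_div (by linarith : (1 : ℝ) - a ≠ 0) ha0.ne']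
    field_simp
    ring
  have : H2 x * Real.log 2 ≤ (H2 a + Real.logb 2 ((1 - a) / a) * (x - a)) * Real.log 2 := by
    rw [e1, e2]; exact key
  exact le_of_mul_le_mul_right this hl2

/-- Let `p 1,…,p N ∈ (0,1)`, `c i = min {p i, 1 - p i}`, fix `λ ≥ 0`
and define the reverse water-filling allocation `D̃* i = min {λ, c i}`. Then for every
tuple `(D̃ i)` with `0 ≤ D̃ i ≤ c i` and `∑ D̃ i = ∑ D̃* i`, one has
`∑ (H(p i) - H(D̃* i)) ≤ ∑ (H(p i) - H(D̃ i))`; i.e. the reverse water-filling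
allocation minimizes the total rate subject to the total-distortion constraint. -/
theorem stmt_15 (N : ℕ) (hN : 1 ≤ N) (p : Fin N → ℝ)
    (hp : ∀ i, 0 < p i ∧ p i < 1) (lam : ℝ) (hlam : 0 ≤ lam)
    (Dt : Fin N → ℝ) (hDt0 : ∀ i, 0 ≤ Dt i)
    (hDtc : ∀ i, Dt i ≤ min (p i) (1 - p i))
    (hsum : ∑ i, Dt i = ∑ i, min lam (min (p i) (1 - p i))) :
    ∑ i, (H2 (p i) - H2 (min lam (min (p i) (1 - p i))))
      ≤ ∑ i, (H2 (p i) - H2 (Dt i)) := by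
  have hc0 : ∀ i, 0 < min (p i) (1 - p i) := by
    intro i; exact lt_min (hp i).1 (by linarith [(hp i).2])
  have hc12 : ∀ i, min (p i) (1 - p i) ≤ 1 / 2 := by
    intro i
    rcases le_total (p i) (1 / 2) with h | h
    · exact le_trans (min_le_left _ _) h
    · exact le_trans (min_le_right _ _) (by linarith)
  by_cases hl0 : lam = 0
  · have hmin : ∀ i, min lam (min (p i) (1 - p i)) = 0 := by
      intro i; rw [hl0]; exact min_eq_left (hc0 i).le
    have hz : ∀ i ∈ Finset.univ, Dt i = 0 := by
      rw [← Finset.sum_eq_zero_iff_of_nonneg (fun i _ => hDt0 i)]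
      rw [hsum]
      exact Finset.sum_eq_zero (fun i _ => hmin i)
    apply le_of_eq
    apply Finset.sum_congr rfl
    intro i hi
    rw [hmin i, hz i hi]
  · have hl : 0 < lam := lt_of_le_of_ne hlam (Ne.symm hl0)
    set t : ℝ := min lam (1 / 2) with ht
    have ht0 : 0 < t := lt_min hl (by norm_num)
    have ht12 : t ≤ 1 / 2 := min_le_right _ _
    have ht1 : t < 1 := by linarith
    set s : ℝ := Real.logb 2 ((1 - t) / t) with hs
    have key : ∀ i, H2 (Dt i) - H2 (min lam (min (p i) (1 - p i)))
        ≤ s * (Dt i - min lam (min (p i) (1 - p i))) := by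
      intro i
      have hx0 : 0 ≤ Dt i := hDt0 i
      have hx1 : Dt i ≤ 1 := le_trans (hDtc i) (by linarith [hc12 i])
      rcases le_total lam (min (p i) (1 - p i)) with h | h
      · have hml : min lam (min (p i) (1 - p i)) = lam := min_eq_left h
        have hteq : t = lam := min_eq_left (le_trans h (hc12 i))
        have := tangent (Dt i) lam hx0 hx1 hl (by linarith [hc12 i])
        rw [hml, hs, hteq]
        linarith
      · have hml : min lam (min (p i) (1 - p i)) = min (p i) (1 - p i) :=
          min_eq_right h
        set c : ℝ := min (p i) (1 - p i) with hcdef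
        have hc0' : 0 < c := hc0 i
        have hc1 : c < 1 := by linarith [hc12 i]
        have hct : c ≤ t := le_min h (hc12 i)
        have hslope : s ≤ Real.logb 2 ((1 - c) / c) := by
          rw [hs]
          apply Real.logb_le_logb_of_le one_lt_two (div_pos (by linarith : (0:ℝ) < 1 - t) ht0)
          rw [div_le_div_iff₀ ht0 hc0']
          nlinarith
        have htan := tangent (Dt i) c hx0 hx1 hc0' hc1
        have hxc : Dt i - c ≤ 0 := by linarith [hDtc i]
        have := mul_le_mul_of_nonpos_right hslope hxc
        rw [hml]
        linarith
    have hsum2 : ∑ i, (H2 (Dt i) - H2 (min lam (min (p i) (1 - p i))))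
        ≤ ∑ i, s * (Dt i - min lam (min (p i) (1 - p i))) :=
      Finset.sum_le_sum (fun i _ => key i)
    have hrhs : ∑ i, s * (Dt i - min lam (min (p i) (1 - p i))) = 0 := by
      rw [← Finset.mul_sum, Finset.sum_sub_distrib, hsum, sub_self, mul_zero]
    rw [Finset.sum_sub_distrib, Finset.sum_sub_distrib]
    rw [Finset.sum_sub_distrib] at hsum2
    linarith [hsum2, hrhs.symm ▸ hsum2]
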